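/- Inscribed polygon setup: let n ≥ 3, o : E, ρ > 0, and let α : Fin n → ℝ be strictly increasing with α (n−1) − α 0 < 2π; define vertices v : ZMod n → E by v k = o + ρ • (Real.cos (α k̄), Real.sin (α k̄)), where k̄ is the canonical representative of k. For i : ZMod n define CW i : List ℝ := List.ofFn (fun k : Fin (n−1) => dist (v i) (v (i + k + 1))) and ACW i : List ℝ := List.ofFn (fun k : Fin (n−1) => dist (v i) (v (i − (k + 1)))). Assume: (1) CW i ≠ ACW i for every i; (2) CW i ≠ CW j for all i ≠ j; (3) CW i ≠ ACW j for all i ≠ j. Then the polygon is asymmetric: (a) there is no 1-dimensional affine subspace L of E such that (EuclideanGeometry.reflection L) '' Set.range v = Set.range v, and (b) (Equiv.pointReflection o) '' Set.range v ≠ Set.range v. -/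

import Mathlib

noncomputable abbrev E : Type := EuclideanSpace ℝ (Fin 2)

namespace AsymAux
open Real
set_option linter.unusedSectionVars false

noncomputable def ee (t : ℝ) : E := (WithLp.equiv 2 (Fin 2 → ℝ)).symm ![Real.cos t, Real.sin t]
lemma ee0 (t : ℝ) : ee t 0 = Real.cos t := rfl
lemma ee1 (t : ℝ) : ee t 1 = Real.sin t := rfl
lemma norm_ee (t : ℝ) : ‖ee t‖ = 1 := by
  rw [EuclideanSpace.norm_eq]
  simp only [Fin.sum_univ_two, ee0, ee1, Real.norm_eq_abs, sq_abs]
  rw [cos_sq_add_sin_sq]; exact Real.sqrt_one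
lemma ee_angle {a b : ℝ} (h : ee a = ee b) : (a : Real.Angle) = b := by
  have h0 : ee a 0 = ee b 0 := by rw [h]
  have h1 : ee a 1 = ee b 1 := by rw [h]
  rw [ee0, ee0] at h0; rw [ee1, ee1] at h1
  apply Real.Angle.cos_sin_inj <;> simpa [Real.Angle.cos_coe, Real.Angle.sin_coe]

lemma ee_ext {t : ℝ} {x : E} (h0 : x 0 = Real.cos t) (h1 : x 1 = Real.sin t) : x = ee t := by
  ext i; fin_cases i
  · exact h0
  · exact h1
lemma exists_ee {x : E} (hx : ‖x‖ = 1) : ∃ φ : ℝ, x = ee φ := by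
  set z : ℂ := ⟨x 0, x 1⟩ with hz
  have habs : ‖z‖ = 1 := by
    rw [EuclideanSpace.norm_eq] at hx
    simp only [Fin.sum_univ_two, Real.norm_eq_abs, sq_abs] at hx
    rw [Complex.norm_def, Complex.normSq_mk]
    simpa [pow_two] using hx
  have hz0 : z ≠ 0 := by
    intro h; rw [h] at habs; simp at habs
  refine ⟨Complex.arg z, ee_ext ?_ ?_⟩
  · have := Complex.cos_arg hz0
    rw [habs] at this; simpa using this.symm
  · have := Complex.sin_arg z
    rw [habs] at this; simpa using this.symm
lemma sq_norm_ee {x : E} (h : ‖x‖ = 1) : x 0 ^2 + x 1^2 = 1 := by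
  rw [EuclideanSpace.norm_eq] at h
  simp only [Fin.sum_univ_two, Real.norm_eq_abs, sq_abs] at h
  nlinarith [Real.sq_sqrt (by positivity : (0:ℝ) ≤ x 0^2 + x 1^2)]
lemma ee_decomp (x : E) : x = x 0 • ee 0 + x 1 • ee (π/2) := by
  ext i; fin_cases i <;> simp [ee0, ee1, PiLp.add_apply, PiLp.smul_apply]

lemma classify (A : E ≃ₗᵢ[ℝ] E) :
    (∃ φ, ∀ t, A (ee t) = ee (t + φ)) ∨ (∃ φ, ∀ t, A (ee t) = ee (φ - t)) := by
  obtain ⟨φ, hφ⟩ := exists_ee (x := A (ee 0)) (by rw [A.norm_map, norm_ee])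
  set w : E := A (ee (π/2)) with hw
  have hwn : w 0 ^ 2 + w 1 ^ 2 = 1 := sq_norm_ee (by rw [hw, A.norm_map, norm_ee])
  have hinner : cos φ * w 0 + sin φ * w 1 = 0 := by
    have h := A.inner_map_map (ee 0) (ee (π/2))
    rw [hφ, ← hw] at h
    simp only [PiLp.inner_apply, RCLike.inner_apply, Fin.sum_univ_two, starRingEnd_apply,
      star_trivial, ee0, ee1] at h
    rw [Real.cos_pi_div_two, Real.sin_pi_div_two, Real.cos_zero, Real.sin_zero] at h
    linarith [h]
  set c : ℝ := cos φ * w 1 - sin φ * w 0 with hc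
  have pyth := sin_sq_add_cos_sq φ
  have hcsq : c ^ 2 = 1 := by
    have key : c ^ 2 = (w 0 ^ 2 + w 1 ^ 2) * (sin φ ^ 2 + cos φ ^ 2)
        - (cos φ * w 0 + sin φ * w 1) ^ 2 := by rw [hc]; ring
    rw [hwn, pyth, hinner] at key; simpa using key
  have hw0 : w 0 = -c * sin φ := by
    linear_combination sin φ * hc + cos φ * hinner - w 0 * pyth
  have hw1 : w 1 = c * cos φ := by
    linear_combination (-cos φ) * hc + sin φ * hinner - w 1 * pyth
  have hAt : ∀ t, A (ee t) = cos t • ee φ + sin t • w := by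
    intro t
    have h := ee_decomp (ee t)
    rw [ee0, ee1] at h
    rw [h, map_add, map_smul, map_smul, hφ, ← hw]
  have hc1 : c = 1 ∨ c = -1 := by
    have : (c - 1) * (c + 1) = 0 := by linear_combination hcsq
    rcases mul_eq_zero.mp this with h | h
    · left; linarith
    · right; linarith
  rcases hc1 with h1 | h1
  · left
    refine ⟨φ, fun t => ?_⟩
    rw [hAt t]
    apply ee_ext
    · simp only [PiLp.add_apply, PiLp.smul_apply, ee0, ee1, smul_eq_mul]
      rw [hw0, h1, Real.cos_add]; ring
    · simp only [PiLp.add_apply, PiLp.smul_apply, ee0, ee1, smul_eq_mul]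
      rw [hw1, h1, Real.sin_add]; ring
  · right
    refine ⟨φ, fun t => ?_⟩
    rw [hAt t]
    apply ee_ext
    · simp only [PiLp.add_apply, PiLp.smul_apply, ee0, ee1, smul_eq_mul]
      rw [hw0, h1, Real.cos_sub]; ring
    · simp only [PiLp.add_apply, PiLp.smul_apply, ee0, ee1, smul_eq_mul]
      rw [hw1, h1, Real.sin_sub]; ring


section Setup
variable {n : ℕ} [NeZero n]

def beta (α : Fin n → ℝ) (i : ZMod n) : ℝ := α ⟨i.val, ZMod.val_lt i⟩

noncomputable def del (α : Fin n → ℝ) (i j : ZMod n) : ℝ :=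
  if i.val ≤ j.val then beta α j - beta α i else beta α j - beta α i + 2 * π

variable {α : Fin n → ℝ}

lemma eq_of_near {x y : ℝ} (k : ℤ) (h : x - y = 2 * π * k)
    (h1 : -(2 * π) < x - y) (h2 : x - y < 2 * π) : x = y := by
  have hπ := pi_pos
  have hk1 : (-1 : ℝ) < (k : ℝ) := by nlinarith
  have hk2 : (k : ℝ) < 1 := by nlinarith
  have hk1' : (-1 : ℤ) < k := by exact_mod_cast hk1
  have hk2' : k < 1 := by exact_mod_cast hk2
  have : k = 0 := by omega
  rw [this] at h; push_cast at h; linarith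

lemma beta_le (hα : StrictMono α) (hn : 0 < n) (i : ZMod n) :
    α ⟨0, hn⟩ ≤ beta α i ∧ beta α i ≤ α ⟨n - 1, by omega⟩ := by
  constructor <;> apply hα.monotone <;> simp [Fin.mk_le_mk]
  · exact Nat.le_sub_one_of_lt (ZMod.val_lt i)

lemma beta_inj (hα : StrictMono α) (hn : 0 < n)
    (hspan : α ⟨n - 1, by omega⟩ - α ⟨0, hn⟩ < 2 * π) {a b : ZMod n} {k : ℤ}
    (h : beta α a - beta α b = 2 * π * k) : a = b := by
  have ha := beta_le hα hn a
  have hb := beta_le hα hn b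
  have heq : beta α a = beta α b := eq_of_near k h (by linarith) (by linarith)
  have : (⟨a.val, ZMod.val_lt a⟩ : Fin n) = ⟨b.val, ZMod.val_lt b⟩ := hα.injective heq
  exact ZMod.val_injective n (by simpa using congrArg Fin.val this)

lemma del_nonneg (hα : StrictMono α) (hn : 0 < n)
    (hspan : α ⟨n - 1, by omega⟩ - α ⟨0, hn⟩ < 2 * π) (a b : ZMod n) :
    0 ≤ del α a b := by
  unfold del
  have ha := beta_le hα hn a
  have hb := beta_le hα hn b
  split
  · rename_i hle
    have : beta α a ≤ beta α b := by
      apply hα.monotone; simpa [Fin.mk_le_mk]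
    linarith
  · linarith

lemma del_lt (hα : StrictMono α) (hn : 0 < n)
    (hspan : α ⟨n - 1, by omega⟩ - α ⟨0, hn⟩ < 2 * π) (a b : ZMod n) :
    del α a b < 2 * π := by
  unfold del
  have ha := beta_le hα hn a
  have hb := beta_le hα hn b
  split
  · linarith
  · rename_i hlt
    push_neg at hlt
    have : beta α b < beta α a := by
      apply hα; simpa [Fin.mk_lt_mk]
    linarith

lemma del_sub_int (a b : ZMod n) : ∃ k : ℤ, del α a b - (beta α b - beta α a) = 2 * π * k := by
  unfold del; split
  · exact ⟨0, by push_cast; ring⟩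
  · exact ⟨1, by push_cast; ring⟩

lemma del_self (a : ZMod n) : del α a a = 0 := by unfold del; simp

lemma del_eq_zero (hα : StrictMono α) (hn : 0 < n)
    (hspan : α ⟨n - 1, by omega⟩ - α ⟨0, hn⟩ < 2 * π) {a b : ZMod n}
    (h : del α a b = 0) : a = b := by
  obtain ⟨k, hk⟩ := del_sub_int (α := α) a b
  rw [h] at hk
  exact (beta_inj hα hn hspan (k := -k) (by push_cast; linarith)).symm

lemma del_right_inj (hα : StrictMono α) (hn : 0 < n)
    (hspan : α ⟨n - 1, by omega⟩ - α ⟨0, hn⟩ < 2 * π) {a b c : ZMod n}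
    (h : del α a b = del α a c) : b = c := by
  obtain ⟨k, hk⟩ := del_sub_int (α := α) a b
  obtain ⟨m, hm⟩ := del_sub_int (α := α) a c
  apply beta_inj hα hn hspan (k := m - k)
  push_cast; rw [h] at hk; linarith

lemma del_add_del (hα : StrictMono α) (hn : 0 < n)
    (hspan : α ⟨n - 1, by omega⟩ - α ⟨0, hn⟩ < 2 * π) {a b : ZMod n} (hab : a ≠ b) :
    del α a b + del α b a = 2 * π := by
  obtain ⟨k, hk⟩ := del_sub_int (α := α) a b
  obtain ⟨m, hm⟩ := del_sub_int (α := α) b a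
  have h1 : 0 ≤ del α a b := del_nonneg hα hn hspan a b
  have h2 : 0 ≤ del α b a := del_nonneg hα hn hspan b a
  have h3 : del α a b < 2 * π := del_lt hα hn hspan a b
  have h4 : del α b a < 2 * π := del_lt hα hn hspan b a
  have h5 : del α a b ≠ 0 := fun h => hab (del_eq_zero hα hn hspan h)
  have h6 : del α b a ≠ 0 := fun h => hab (del_eq_zero hα hn hspan h).symm
  -- sum = 2π(k+m), in (0, 4π), so = 2π
  have hπ := pi_pos
  have hsum : del α a b + del α b a = 2 * π * ((k : ℝ) + m) := by ring_nf; ring_nf at hk hm; linarith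
  have hk1 : (0 : ℝ) < (k : ℝ) + m := by
    by_contra hcon
    push_neg at hcon
    have : del α a b + del α b a ≤ 0 := by
      rw [hsum]; nlinarith
    rcases lt_or_eq_of_le h1 with h | h
    · linarith
    · exact h5 h.symm
  have hk2 : ((k : ℝ) + m) < 2 := by nlinarith
  have hk1' : (0 : ℤ) < k + m := by exact_mod_cast hk1
  have hk2' : k + m < 2 := by exact_mod_cast hk2
  have : k + m = 1 := by omega
  have : ((k : ℝ) + m) = 1 := by exact_mod_cast this
  rw [hsum, this, mul_one]



lemma val_add_cast (i : ZMod n) (k : ℕ) : (i + (k : ZMod n)).val = (i.val + k) % n := by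
  rw [ZMod.val_add, ZMod.val_natCast]
  conv_rhs => rw [Nat.add_mod]
  rw [Nat.mod_eq_of_lt (ZMod.val_lt i)]

lemma cast_ne_zero_zmod {k : ℕ} (h1 : 1 ≤ k) (h2 : k < n) : (k : ZMod n) ≠ 0 := by
  intro h
  have := ZMod.val_natCast (n := n) k
  rw [h, ZMod.val_zero, Nat.mod_eq_of_lt h2] at this
  omega

lemma add_cast_ne (i : ZMod n) {k : ℕ} (h1 : 1 ≤ k) (h2 : k < n) : i + (k : ZMod n) ≠ i := by
  intro h
  have : (k : ZMod n) = 0 := by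
    have := congrArg (· - i) h
    simpa [add_comm, add_sub_cancel_right] using this
  exact cast_ne_zero_zmod h1 h2 this

lemma beta_eq (j : ZMod n) (p : ℕ) (hp : p < n) (h : j.val = p) : beta α j = α ⟨p, hp⟩ := by
  unfold beta; congr 1; exact Fin.ext (by simp [h])

lemma del_val (i : ZMod n) {k : ℕ} (h1 : 1 ≤ k) (h2 : k ≤ n - 1) :
    del α i (i + (k : ZMod n)) =
      if h : i.val + k < n then α ⟨i.val + k, h⟩ - α ⟨i.val, ZMod.val_lt i⟩
      else α ⟨i.val + k - n, by have := ZMod.val_lt i; omega⟩ - α ⟨i.val, ZMod.val_lt i⟩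
        + 2 * π := by
  have hn : 0 < n := Nat.pos_of_ne_zero (NeZero.ne n)
  have hkn : k < n := by omega
  have hval : (i + (k : ZMod n)).val = (i.val + k) % n := val_add_cast i k
  have hiv := ZMod.val_lt i
  by_cases hlt : i.val + k < n
  · have hmod : (i + (k : ZMod n)).val = i.val + k := by
      rw [hval]; exact Nat.mod_eq_of_lt hlt
    rw [dif_pos hlt]
    unfold del
    rw [if_pos (by omega), beta_eq (i + (k : ZMod n)) (i.val + k) hlt hmod,
      beta_eq i i.val (ZMod.val_lt i) rfl]
  · push_neg at hlt
    have hmod : (i + (k : ZMod n)).val = i.val + k - n := by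
      rw [hval, Nat.mod_eq_sub_mod hlt, Nat.mod_eq_of_lt (by omega)]
    rw [dif_neg (by omega)]
    unfold del
    rw [if_neg (by omega), beta_eq (i + (k : ZMod n)) (i.val + k - n) (by omega) hmod,
      beta_eq i i.val (ZMod.val_lt i) rfl]

lemma del_strictMono (hα : StrictMono α) (hn : 0 < n)
    (hspan : α ⟨n - 1, by omega⟩ - α ⟨0, hn⟩ < 2 * π) (i : ZMod n) {k m : ℕ}
    (h1 : 1 ≤ k) (h2 : k < m) (h3 : m ≤ n - 1) :
    del α i (i + (k : ZMod n)) < del α i (i + (m : ZMod n)) := by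
  have hiv := ZMod.val_lt i
  have bound : ∀ (p q : Fin n), α p - α q < 2 * π := by
    intro p q
    have hp : α p ≤ α ⟨n - 1, by omega⟩ := hα.monotone (by simp [Fin.le_def]; omega)
    have hq : α ⟨0, hn⟩ ≤ α q := hα.monotone (by simp [Fin.le_def])
    linarith
  rw [del_val i h1 (by omega), del_val i (by omega : 1 ≤ m) h3]
  split
  · rename_i hk
    split
    · rename_i hm
      have : α ⟨i.val + k, hk⟩ < α ⟨i.val + m, hm⟩ := hα (by simp [Fin.lt_def]; omega)
      linarith
    · rename_i hm
      push_neg at hm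
      have := bound ⟨i.val + k, hk⟩ ⟨i.val + m - n, by omega⟩
      linarith
  · rename_i hk
    push_neg at hk
    split
    · rename_i hm; omega
    · rename_i hm
      push_neg at hm
      have : α ⟨i.val + k - n, by omega⟩ < α ⟨i.val + m - n, by omega⟩ :=
        hα (by simp [Fin.lt_def]; omega)
      linarith


lemma strictMono_fin_id {m : ℕ} {f : Fin m → Fin m} (hf : StrictMono f) : ∀ k, f k = k := by
  have hbij : Function.Bijective f := Finite.injective_iff_bijective.mp hf.injective
  intro k
  exact Fin.ext (Fin.coe_orderIso_apply (StrictMono.orderIsoOfSurjective f hf hbij.2) k)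

lemma strictAnti_fin_rev {m : ℕ} {f : Fin m → Fin m} (hf : StrictAnti f) : ∀ k, f k = k.rev := by
  have hrev : StrictAnti (Fin.rev : Fin m → Fin m) := fun a b h => Fin.rev_lt_rev.mpr h
  have hcomp : StrictMono (f ∘ Fin.rev) := fun a b h => hf (hrev h)
  intro k
  have := strictMono_fin_id hcomp k.rev
  simpa [Function.comp, Fin.rev_rev] using this

lemma structR (hα : StrictMono α) (hn : 0 < n)
    (hspan : α ⟨n - 1, by omega⟩ - α ⟨0, hn⟩ < 2 * π)
    (p : ZMod n → ZMod n) (hpinj : Function.Injective p)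
    (hdel : ∀ a b, del α (p a) (p b) = del α a b) (i : ZMod n) {k : ℕ}
    (hk1 : 1 ≤ k) (hk2 : k ≤ n - 1) :
    p (i + (k : ZMod n)) = p i + (k : ZMod n) := by
  set d : Fin (n-1) → ZMod n := fun j => p (i + ((j.val + 1 : ℕ) : ZMod n)) - p i with hd
  have hd_ne : ∀ j, d j ≠ 0 := by
    intro j h
    have hne : i + ((j.val + 1 : ℕ) : ZMod n) ≠ i :=
      add_cast_ne i (by omega) (by have := j.isLt; omega)
    exact hne (hpinj (by rwa [sub_eq_zero] at h))
  have hdval : ∀ j, 1 ≤ (d j).val ∧ (d j).val ≤ n - 1 := by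
    intro j
    have h1 : (d j).val ≠ 0 := fun h => hd_ne j ((ZMod.val_eq_zero _).mp h)
    have h2 := ZMod.val_lt (d j)
    omega
  have hpd : ∀ j : Fin (n-1), p i + (((d j).val : ℕ) : ZMod n) = p (i + ((j.val + 1 : ℕ) : ZMod n)) := by
    intro j
    rw [ZMod.natCast_rightInverse (d j), hd]
    ring
  set M : Fin (n-1) → Fin (n-1) := fun j => ⟨(d j).val - 1, by have := hdval j; omega⟩ with hM
  have key : ∀ j : Fin (n-1),
      del α (p i) (p i + (((M j).val + 1 : ℕ) : ZMod n)) = del α i (i + ((j.val + 1 : ℕ) : ZMod n)) := by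
    intro j
    have : (M j).val + 1 = (d j).val := by have := hdval j; simp [hM]; omega
    rw [this, hpd j, hdel]
  have hMmono : StrictMono M := by
    intro j j' hjj
    by_contra hcon
    push_neg at hcon
    have hlt : del α i (i + ((j.val + 1 : ℕ) : ZMod n)) < del α i (i + ((j'.val + 1 : ℕ) : ZMod n)) :=
      del_strictMono hα hn hspan i (by omega) (by have := Fin.lt_def.mp hjj; omega)
        (by have := j'.isLt; omega)
    rcases eq_or_lt_of_le hcon with heq | hlt2
    · rw [← key j, ← key j', heq] at hlt
      exact lt_irrefl _ hlt
    · have := del_strictMono hα hn hspan (p i) (k := (M j').val + 1) (m := (M j).val + 1)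
        (by omega) (by have := Fin.lt_def.mp hlt2; omega) (by have := (M j).isLt; omega)
      rw [key j, key j'] at this
      linarith
  have hMid := strictMono_fin_id hMmono
  -- apply with j := ⟨k - 1, _⟩
  have hkn1 : k - 1 < n - 1 := by omega
  have hj := hMid ⟨k - 1, hkn1⟩
  have hdv : (d ⟨k - 1, hkn1⟩).val = k := by
    have := congrArg Fin.val hj
    simp [hM] at this
    have := hdval ⟨k - 1, hkn1⟩
    omega
  have : d ⟨k - 1, hkn1⟩ = (k : ZMod n) := by
    apply ZMod.val_injective
    rw [hdv, ZMod.val_natCast, Nat.mod_eq_of_lt (by omega)]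
  have h2' := hpd ⟨k - 1, hkn1⟩
  rw [hdv] at h2'
  have hk' : (⟨k - 1, hkn1⟩ : Fin (n-1)).val + 1 = k := by simp; omega
  rw [hk'] at h2'
  exact h2'.symm

lemma structS (hα : StrictMono α) (hn : 0 < n)
    (hspan : α ⟨n - 1, by omega⟩ - α ⟨0, hn⟩ < 2 * π)
    (p : ZMod n → ZMod n) (hpinj : Function.Injective p)
    (hdel : ∀ a b, del α (p a) (p b) = del α b a) (i : ZMod n) {k : ℕ}
    (hk1 : 1 ≤ k) (hk2 : k ≤ n - 1) :
    p (i + (k : ZMod n)) = p i + ((n - k : ℕ) : ZMod n) := by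
  set d : Fin (n-1) → ZMod n := fun j => p (i + ((j.val + 1 : ℕ) : ZMod n)) - p i with hd
  have hd_ne : ∀ j, d j ≠ 0 := by
    intro j h
    have hne : i + ((j.val + 1 : ℕ) : ZMod n) ≠ i :=
      add_cast_ne i (by omega) (by have := j.isLt; omega)
    exact hne (hpinj (by rwa [sub_eq_zero] at h))
  have hdval : ∀ j, 1 ≤ (d j).val ∧ (d j).val ≤ n - 1 := by
    intro j
    have h1 : (d j).val ≠ 0 := fun h => hd_ne j ((ZMod.val_eq_zero _).mp h)
    have h2 := ZMod.val_lt (d j)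
    omega
  have hpd : ∀ j : Fin (n-1), p i + (((d j).val : ℕ) : ZMod n) = p (i + ((j.val + 1 : ℕ) : ZMod n)) := by
    intro j
    rw [ZMod.natCast_rightInverse (d j), hd]
    ring
  set M : Fin (n-1) → Fin (n-1) := fun j => ⟨(d j).val - 1, by have := hdval j; omega⟩ with hM
  have key : ∀ j : Fin (n-1),
      del α (p i) (p i + (((M j).val + 1 : ℕ) : ZMod n))
        = 2 * π - del α i (i + ((j.val + 1 : ℕ) : ZMod n)) := by
    intro j
    have hMv : (M j).val + 1 = (d j).val := by have := hdval j; simp [hM]; omega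
    have hne : i ≠ i + ((j.val + 1 : ℕ) : ZMod n) :=
      fun h => add_cast_ne i (k := j.val + 1) (by omega) (by have := j.isLt; omega) h.symm
    rw [hMv, hpd j, hdel]
    have := del_add_del hα hn hspan hne
    linarith
  have hManti : StrictAnti M := by
    intro j j' hjj
    by_contra hcon
    push_neg at hcon
    have hlt : del α i (i + ((j.val + 1 : ℕ) : ZMod n)) < del α i (i + ((j'.val + 1 : ℕ) : ZMod n)) :=
      del_strictMono hα hn hspan i (by omega) (by have := Fin.lt_def.mp hjj; omega)
        (by have := j'.isLt; omega)
    rcases eq_or_lt_of_le hcon with heq | hlt2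
    · have e1 := key j
      have e2 := key j'
      rw [heq] at e1
      linarith
    · have := del_strictMono hα hn hspan (p i) (k := (M j).val + 1) (m := (M j').val + 1)
        (by omega) (by have := Fin.lt_def.mp hlt2; omega) (by have := (M j').isLt; omega)
      have e1 := key j
      have e2 := key j'
      linarith
  have hMrev := strictAnti_fin_rev hManti
  have hkn1 : k - 1 < n - 1 := by omega
  have hj := hMrev ⟨k - 1, hkn1⟩
  have hdv : (d ⟨k - 1, hkn1⟩).val = n - k := by
    have h1 := congrArg Fin.val hj
    rw [Fin.val_rev] at h1
    simp [hM] at h1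
    have := hdval ⟨k - 1, hkn1⟩
    omega
  have h2' := hpd ⟨k - 1, hkn1⟩
  rw [hdv] at h2'
  have hk' : (⟨k - 1, hkn1⟩ : Fin (n-1)).val + 1 = k := by simp; omega
  rw [hk'] at h2'
  exact h2'.symm


lemma v_injective (hα : StrictMono α) (hn : 0 < n)
    (hspan : α ⟨n - 1, by omega⟩ - α ⟨0, hn⟩ < 2 * π)
    (o : E) {ρ : ℝ} (hρ : 0 < ρ) (v : ZMod n → E)
    (hv' : ∀ i, v i = o + ρ • ee (beta α i)) : Function.Injective v := by
  intro a b h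
  rw [hv' a, hv' b] at h
  have h2' : ρ • ee (beta α a) = ρ • ee (beta α b) := add_left_cancel h
  have h3' : ee (beta α a) = ee (beta α b) := smul_right_injective _ (ne_of_gt hρ) h2'
  obtain ⟨k, hk⟩ := Real.Angle.angle_eq_iff_two_pi_dvd_sub.mp (ee_angle h3')
  exact beta_inj hα hn hspan hk

lemma master (hα : StrictMono α) (hn : 0 < n)
    (hspan : α ⟨n - 1, by omega⟩ - α ⟨0, hn⟩ < 2 * π)
    (o : E) {ρ : ℝ} (hρ : 0 < ρ) (v : ZMod n → E)
    (hv' : ∀ i, v i = o + ρ • ee (beta α i))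
    (CW ACW : ZMod n → List ℝ)
    (hCW : ∀ i : ZMod n, CW i =
      List.ofFn (fun k : Fin (n - 1) => dist (v i) (v (i + ((k : ℕ) : ZMod n) + 1))))
    (hACW : ∀ i : ZMod n, ACW i =
      List.ofFn (fun k : Fin (n - 1) => dist (v i) (v (i - (((k : ℕ) : ZMod n) + 1)))))
    (h1 : ∀ i : ZMod n, CW i ≠ ACW i)
    (h2 : ∀ i j : ZMod n, i ≠ j → CW i ≠ CW j)
    (h3 : ∀ i j : ZMod n, i ≠ j → CW i ≠ ACW j)
    (A : E ≃ₗᵢ[ℝ] E) (f : E → E) (hf : ∀ x, f x = o + A (x - o))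
    (hV : f '' Set.range v = Set.range v) : ∀ x, f x = x := by
  have hn3 : 0 < n - 1 ∨ True := Or.inr trivial
  have v_inj : Function.Injective v := by
    intro a b h
    rw [hv' a, hv' b] at h
    have h2' : ρ • ee (beta α a) = ρ • ee (beta α b) := add_left_cancel h
    have h3' : ee (beta α a) = ee (beta α b) := smul_right_injective _ (ne_of_gt hρ) h2'
    obtain ⟨k, hk⟩ := Real.Angle.angle_eq_iff_two_pi_dvd_sub.mp (ee_angle h3')
    exact beta_inj hα hn hspan hk
  have hfv : ∀ i : ZMod n, ∃ j, v j = f (v i) := by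
    intro i
    have : f (v i) ∈ Set.range v := by
      rw [← hV]; exact Set.mem_image_of_mem f (Set.mem_range_self i)
    exact this
  choose p hp using hfv
  have hpinj : Function.Injective p := by
    intro a b h
    have : f (v a) = f (v b) := by rw [← hp, ← hp, h]
    have hfi : v a = v b := by
      rw [hf, hf] at this
      have := add_left_cancel this
      have := A.injective this
      exact sub_left_injective this
    exact v_inj hfi
  have hA : ∀ i, A (ee (beta α i)) = ee (beta α (p i)) := by
    intro i
    have h := hp i
    rw [hf, hv' i, hv' (p i), add_sub_cancel_left, map_smul] at h
    have h2' : ρ • ee (beta α (p i)) = ρ • A (ee (beta α i)) := add_left_cancel h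
    exact (smul_right_injective _ (ne_of_gt hρ) h2').symm
  have hdist : ∀ x y, dist (f x) (f y) = dist x y := by
    intro x y
    rw [hf, hf, dist_eq_norm, dist_eq_norm]
    have h1' : o + A (x - o) - (o + A (y - o)) = A (x - o) - A (y - o) := by abel
    rw [h1', ← map_sub, A.norm_map]
    congr 1
    abel
  rcases classify A with ⟨φ, hrot⟩ | ⟨φ, href⟩
  · -- rotation case
    have hcong : ∀ i, ∃ kk : ℤ, beta α (p i) - (beta α i + φ) = 2 * π * kk := by
      intro i
      have : ee (beta α (p i)) = ee (beta α i + φ) := (hA i).symm.trans (hrot _)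
      exact Real.Angle.angle_eq_iff_two_pi_dvd_sub.mp (ee_angle this)
    have hdel : ∀ a b, del α (p a) (p b) = del α a b := by
      intro a b
      obtain ⟨k1, hk1⟩ := hcong a
      obtain ⟨k2, hk2⟩ := hcong b
      obtain ⟨k3, hk3⟩ := del_sub_int (α := α) (p a) (p b)
      obtain ⟨k4, hk4⟩ := del_sub_int (α := α) a b
      have b1 := del_nonneg hα hn hspan (p a) (p b)
      have b2 := del_lt hα hn hspan (p a) (p b)
      have b3 := del_nonneg hα hn hspan a b
      have b4 := del_lt hα hn hspan a b
      exact eq_of_near (k := k2 - k1 + k3 - k4) (by push_cast; linarith)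
        (by linarith) (by linarith)
    by_cases hpid : ∀ i, p i = i
    · -- f is the identity
      obtain ⟨k0, hk0⟩ := hcong 0
      rw [hpid 0] at hk0
      have hφ : φ = (-k0 : ℤ) * (2 * π) := by push_cast; linarith
      have hAid : ∀ t, A (ee t) = ee t := by
        intro t
        rw [hrot t]
        apply ee_ext
        · rw [ee0, hφ]; exact Real.cos_add_int_mul_two_pi t (-k0)
        · rw [ee1, hφ]; exact Real.sin_add_int_mul_two_pi t (-k0)
      intro x
      rw [hf]
      have hxd := ee_decomp (x - o)
      have hfix : A (x - o) = x - o := by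
        calc A (x - o) = A ((x - o) 0 • ee 0 + (x - o) 1 • ee (π/2)) := by rw [← hxd]
          _ = (x - o) 0 • A (ee 0) + (x - o) 1 • A (ee (π/2)) := by
              rw [map_add, map_smul, map_smul]
          _ = (x - o) 0 • ee 0 + (x - o) 1 • ee (π/2) := by rw [hAid, hAid]
          _ = x - o := hxd.symm
      rw [hfix]; abel
    · exfalso
      push_neg at hpid
      obtain ⟨i, hi⟩ := hpid
      apply h2 i (p i) (fun h => hi h.symm)
      rw [hCW i, hCW (p i)]
      congr 1
      funext k
      have hk1 : 1 ≤ k.val + 1 := by omega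
      have hk2 : k.val + 1 ≤ n - 1 := by have := k.isLt; omega
      have hstr := structR hα hn hspan p hpinj hdel i hk1 hk2
      have hcast : i + ((k : ℕ) : ZMod n) + 1 = i + (((k : ℕ) + 1 : ℕ) : ZMod n) := by
        push_cast; ring
      have hcast2 : p i + ((k : ℕ) : ZMod n) + 1 = p i + (((k : ℕ) + 1 : ℕ) : ZMod n) := by
        push_cast; ring
      calc dist (v i) (v (i + ((k : ℕ) : ZMod n) + 1))
          = dist (f (v i)) (f (v (i + ((k : ℕ) : ZMod n) + 1))) := (hdist _ _).symm
        _ = dist (v (p i)) (v (p (i + ((k : ℕ) : ZMod n) + 1))) := by rw [← hp, ← hp]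
        _ = dist (v (p i)) (v (p i + ((k : ℕ) : ZMod n) + 1)) := by
            rw [hcast, hstr, ← hcast2]
  · -- reflection case: always contradicts
    exfalso
    have hcong : ∀ i, ∃ kk : ℤ, beta α (p i) - (φ - beta α i) = 2 * π * kk := by
      intro i
      have : ee (beta α (p i)) = ee (φ - beta α i) := (hA i).symm.trans (href _)
      exact Real.Angle.angle_eq_iff_two_pi_dvd_sub.mp (ee_angle this)
    have hdel : ∀ a b, del α (p a) (p b) = del α b a := by
      intro a b
      obtain ⟨k1, hk1⟩ := hcong a
      obtain ⟨k2, hk2⟩ := hcong b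
      obtain ⟨k3, hk3⟩ := del_sub_int (α := α) (p a) (p b)
      obtain ⟨k4, hk4⟩ := del_sub_int (α := α) b a
      have b1 := del_nonneg hα hn hspan (p a) (p b)
      have b2 := del_lt hα hn hspan (p a) (p b)
      have b3 := del_nonneg hα hn hspan b a
      have b4 := del_lt hα hn hspan b a
      exact eq_of_near (k := k2 - k1 + k3 - k4) (by push_cast; linarith)
        (by linarith) (by linarith)
    have key : CW 0 = ACW (p 0) := by
      rw [hCW 0, hACW (p 0)]
      congr 1
      funext k
      have hk1 : 1 ≤ k.val + 1 := by omega
      have hk2 : k.val + 1 ≤ n - 1 := by have := k.isLt; omega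
      have hstr := structS hα hn hspan p hpinj hdel 0 hk1 hk2
      have hcast : (0 : ZMod n) + ((k : ℕ) : ZMod n) + 1 = (0 : ZMod n) + (((k : ℕ) + 1 : ℕ) : ZMod n) := by
        push_cast; ring
      have hsub : ((n - ((k : ℕ) + 1) : ℕ) : ZMod n) = -((((k : ℕ) : ZMod n)) + 1) := by
        have hle : (k : ℕ) + 1 ≤ n := by have := k.isLt; omega
        rw [Nat.cast_sub hle, ZMod.natCast_self]
        push_cast; ring
      calc dist (v 0) (v (0 + ((k : ℕ) : ZMod n) + 1))
          = dist (f (v 0)) (f (v (0 + ((k : ℕ) : ZMod n) + 1))) := (hdist _ _).symm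
        _ = dist (v (p 0)) (v (p (0 + ((k : ℕ) : ZMod n) + 1))) := by rw [← hp, ← hp]
        _ = dist (v (p 0)) (v (p 0 - (((k : ℕ) : ZMod n) + 1))) := by
            rw [hcast, hstr, hsub, sub_eq_add_neg]
    by_cases hp0 : p 0 = 0
    · rw [hp0] at key
      exact h1 0 key
    · exact h3 0 (p 0) (fun h => hp0 h.symm) key

end Setup

end AsymAux

/-- If, for an inscribed polygon, the clockwise/anticlockwise distance tuples satisfy
`CW i ≠ ACW i` for all `i`, `CW i ≠ CW j` and `CW i ≠ ACW j` for all `i ≠ j`, then the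
polygon is asymmetric: no reflection across a line maps its vertex set onto itself, and
the point reflection about the center does not map its vertex set onto itself. -/
theorem distance_tuple_conditions_imply_asymmetric
    (n : ℕ) (hn : 3 ≤ n) (o : E) (ρ : ℝ) (hρ : 0 < ρ)
    (α : Fin n → ℝ) (hα : StrictMono α)
    (hspan : α ⟨n - 1, by omega⟩ - α ⟨0, by omega⟩ < 2 * Real.pi)
    (v : ZMod n → E)
    (hv : ∀ k : Fin n, v ((k : ℕ) : ZMod n) =
      o + ρ • (WithLp.equiv 2 (Fin 2 → ℝ)).symm ![Real.cos (α k), Real.sin (α k)])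
    (CW ACW : ZMod n → List ℝ)
    (hCW : ∀ i : ZMod n, CW i =
      List.ofFn (fun k : Fin (n - 1) => dist (v i) (v (i + ((k : ℕ) : ZMod n) + 1))))
    (hACW : ∀ i : ZMod n, ACW i =
      List.ofFn (fun k : Fin (n - 1) => dist (v i) (v (i - (((k : ℕ) : ZMod n) + 1)))))
    (h1 : ∀ i : ZMod n, CW i ≠ ACW i)
    (h2 : ∀ i j : ZMod n, i ≠ j → CW i ≠ CW j)
    (h3 : ∀ i j : ZMod n, i ≠ j → CW i ≠ ACW j) :
    (∀ (L : AffineSubspace ℝ E) [Nonempty L],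
        Module.finrank ℝ L.direction = 1 →
        (EuclideanGeometry.reflection L) '' Set.range v ≠ Set.range v) ∧
      (Equiv.pointReflection o) '' Set.range v ≠ Set.range v := by
  haveI : NeZero n := ⟨by omega⟩
  have hn0 : 0 < n := by omega
  open AsymAux in
  have hv' : ∀ i : ZMod n, v i = o + ρ • AsymAux.ee (AsymAux.beta α i) := by
    intro i
    have h := hv ⟨i.val, ZMod.val_lt i⟩
    rwa [ZMod.natCast_rightInverse i] at h
  have hspan' : α ⟨n - 1, by omega⟩ - α ⟨0, hn0⟩ < 2 * Real.pi := hspan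
  have hv_inj : Function.Injective v :=
    AsymAux.v_injective hα hn0 hspan' o hρ v hv'
  have hrad : ∀ i : ZMod n, dist (v i) o = ρ := by
    intro i
    rw [hv' i, dist_eq_norm, add_sub_cancel_left, norm_smul, AsymAux.norm_ee,
      Real.norm_eq_abs, abs_of_pos hρ, mul_one]
  constructor
  · intro L _ hLr hV'
    set f := EuclideanGeometry.reflection L with hfdef
    -- circumcenter argument: f o = o
    have hcos : EuclideanGeometry.Cospherical (Set.range v) :=
      ⟨o, ρ, by rintro q ⟨i, rfl⟩; exact hrad i⟩
    set w : Fin 3 → ZMod n := fun j => ((j.val : ℕ) : ZMod n) with hw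
    have hwinj : Function.Injective (fun j : Fin 3 => v (w j)) := by
      intro a b h
      have h2 := hv_inj h
      have h3 := congrArg ZMod.val h2
      rw [hw] at h3
      simp only [ZMod.val_natCast] at h3
      rw [Nat.mod_eq_of_lt (by omega : a.val < n), Nat.mod_eq_of_lt (by omega : b.val < n)] at h3
      exact Fin.ext h3
    have haff : AffineIndependent ℝ (fun j : Fin 3 => v (w j)) :=
      hcos.affineIndependent (by rintro q ⟨j, rfl⟩; exact ⟨w j, rfl⟩) hwinj
    set s : Affine.Simplex ℝ E 2 := ⟨fun j => v (w j), haff⟩ with hs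
    have hspan_top : affineSpan ℝ (Set.range s.points) = ⊤ := by
      rw [haff.affineSpan_eq_top_iff_card_eq_finrank_add_one]
      simp [finrank_euclideanSpace_fin]
    have ho : o = s.circumcenter :=
      s.eq_circumcenter_of_dist_eq (by rw [hspan_top]; exact AffineSubspace.mem_top ℝ E o)
        (fun j => hrad (w j))
    have hfo' : ∀ j, dist (s.points j) (f o) = ρ := by
      intro j
      obtain ⟨a, ha⟩ : ∃ a, f (v a) = v (w j) := by
        have hm : v (w j) ∈ (f : E → E) '' Set.range v := by
          rw [hV']; exact ⟨w j, rfl⟩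
        obtain ⟨x, ⟨a, rfl⟩, hx⟩ := hm
        exact ⟨a, hx⟩
      have : s.points j = f (v a) := ha.symm
      rw [this, f.dist_map]
      exact hrad a
    have ho2 : f o = s.circumcenter :=
      s.eq_circumcenter_of_dist_eq (by rw [hspan_top]; exact AffineSubspace.mem_top ℝ E (f o)) hfo'
    have hfo : f o = o := by rw [ho2, ← ho]
    set A := f.linearIsometryEquiv with hA
    have hf' : ∀ x : E, f x = o + A (x - o) := by
      intro x
      have hx : x = (x - o) +ᵥ o := by
        rw [vadd_eq_add]; abel
      conv_lhs => rw [hx]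
      rw [f.map_vadd, hfo, vadd_eq_add, add_comm]
    have hid := AsymAux.master hα hn0 hspan' o hρ v hv' CW ACW hCW hACW h1 h2 h3 A f hf' hV'
    have hLne : L ≠ ⊤ := by
      intro h
      rw [h, AffineSubspace.direction_top, finrank_top, finrank_euclideanSpace_fin] at hLr
      omega
    obtain ⟨x, hx⟩ : ∃ x : E, x ∉ L := by
      by_contra hcon
      push_neg at hcon
      exact hLne (SetLike.ext fun y => ⟨fun _ => AffineSubspace.mem_top ℝ E y, fun _ => hcon y⟩)
    have hxx := hid x
    rw [hfdef] at hxx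
    rw [EuclideanGeometry.reflection_eq_self_iff] at hxx
    exact hx hxx
  · intro hV'
    set f : E → E := ⇑(Equiv.pointReflection o) with hfdef
    have hf' : ∀ x : E, f x = o + (LinearIsometryEquiv.neg ℝ (E := E)) (x - o) := by
      intro x
      have hneg : (LinearIsometryEquiv.neg ℝ (E := E)) (x - o) = -(x - o) := rfl
      rw [hfdef, hneg]
      simp only [Equiv.pointReflection_apply, vsub_eq_sub, vadd_eq_add]
      abel
    have hid := AsymAux.master hα hn0 hspan' o hρ v hv' CW ACW hCW hACW h1 h2 h3
      (LinearIsometryEquiv.neg ℝ (E := E)) f hf' hV'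
    have h0 := hid (v 0)
    rw [hf' (v 0), hv' 0] at h0
    have h2' : -(ρ • AsymAux.ee (AsymAux.beta α 0)) = ρ • AsymAux.ee (AsymAux.beta α 0) := by
      have h5 := add_left_cancel h0
      rw [show (LinearIsometryEquiv.neg ℝ (E := E)) (o + ρ • AsymAux.ee (AsymAux.beta α 0) - o)
          = -(o + ρ • AsymAux.ee (AsymAux.beta α 0) - o) from rfl, add_sub_cancel_left] at h5
      exact h5
    have hz : ρ • AsymAux.ee (AsymAux.beta α 0) = 0 := by
      have h4 : (2 : ℝ) • (ρ • AsymAux.ee (AsymAux.beta α 0)) = 0 := by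
        rw [two_smul]
        nth_rewrite 1 [← h2']
        abel
      rcases smul_eq_zero.mp h4 with h | h
      · norm_num at h
      · exact h
    have hnm : ‖ρ • AsymAux.ee (AsymAux.beta α 0)‖ = ρ := by
      rw [norm_smul, AsymAux.norm_ee, Real.norm_eq_abs, abs_of_pos hρ, mul_one]
    rw [hz, norm_zero] at hnm
    exact absurd hnm.symm (ne_of_gt hρ)
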